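/- Let K be a field, p a positive integer, and φ: M_{1,p}(K) → M_{1,p}(K), ψ: M_{p,1}(K) → M_{p,1}(K) linear maps such that for every row vector L and column vector C with LC = 0, one has Lψ(C) = 0 and φ(L)C = 0. Then both φ and ψ are scalar multiples of the identity. -/
import Mathlib

section
variable {K : Type*} [Field K] {p : ℕ}

/-- row basis vector -/
private def rb (i : Fin p) : Matrix (Fin 1) (Fin p) K :=
  Matrix.of fun _ k => if k = i then 1 else 0

/-- column basis vector -/
private def cb (i : Fin p) : Matrix (Fin p) (Fin 1) K :=
  Matrix.of fun k _ => if k = i then 1 else 0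

lemma row_decomp (L : Matrix (Fin 1) (Fin p) K) :
    L = ∑ i, L 0 i • rb i := by
  ext a b
  have ha : a = 0 := Subsingleton.elim a 0
  subst ha
  simp [rb, Matrix.sum_apply, mul_ite, Finset.sum_ite_eq']

lemma col_decomp (C : Matrix (Fin p) (Fin 1) K) :
    C = ∑ i, C i 0 • cb i := by
  ext a b
  have hb : b = 0 := Subsingleton.elim b 0
  subst hb
  simp [cb, Matrix.sum_apply, mul_ite, Finset.sum_ite_eq']

end

theorem stmt5 {K : Type*} [Field K] (p : ℕ) (hp : 0 < p)
    (φ : Matrix (Fin 1) (Fin p) K →ₗ[K] Matrix (Fin 1) (Fin p) K)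
    (ψ : Matrix (Fin p) (Fin 1) K →ₗ[K] Matrix (Fin p) (Fin 1) K)
    (h : ∀ (L : Matrix (Fin 1) (Fin p) K) (C : Matrix (Fin p) (Fin 1) K),
      L * C = 0 → L * ψ C = 0 ∧ φ L * C = 0) :
    (∃ α : K, ∀ L : Matrix (Fin 1) (Fin p) K, φ L = α • L) ∧
    (∃ β : K, ∀ C : Matrix (Fin p) (Fin 1) K, ψ C = β • C) := by
  have hef : ∀ i j : Fin p, i ≠ j → (rb i : Matrix (Fin 1) (Fin p) K) * (cb j : Matrix (Fin p) (Fin 1) K) = 0 := by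
    intro i j hij
    ext a b
    simp [rb, cb, Matrix.mul_apply, ite_and, mul_ite, ite_mul, Finset.sum_ite_eq', hij, Ne.symm hij]
  -- off-diagonal vanishing for φ and ψ
  have hφ0 : ∀ i j : Fin p, i ≠ j → (φ (rb i)) 0 j = 0 := by
    intro i j hij
    have h2 := (h (rb i) (cb j) (hef i j hij)).2
    have := congrFun (congrFun h2 0) 0
    simpa [cb, Matrix.mul_apply, mul_ite, Finset.sum_ite_eq'] using this
  have hψ0 : ∀ i j : Fin p, i ≠ j → (ψ (cb j)) i 0 = 0 := by
    intro i j hij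
    have h1 := (h (rb i) (cb j) (hef i j hij)).1
    have := congrFun (congrFun h1 0) 0
    simpa [rb, Matrix.mul_apply, ite_mul, Finset.sum_ite_eq, eq_comm] using this
  -- diagonal form
  have hφd : ∀ i : Fin p, φ (rb i) = (φ (rb i)) 0 i • rb i := by
    intro i
    ext a b
    have ha : a = 0 := Subsingleton.elim a 0
    subst ha
    by_cases hb : b = i
    · subst hb; simp [rb]
    · rw [hφ0 i b (fun hc => hb hc.symm)]
      simp [rb, hb]
  have hψd : ∀ i : Fin p, ψ (cb i) = (ψ (cb i)) i 0 • cb i := by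
    intro i
    ext a b
    have hb : b = 0 := Subsingleton.elim b 0
    subst hb
    by_cases ha : a = i
    · subst ha; simp [cb]
    · rw [hψ0 a i ha]
      simp [cb, ha]
  -- equality of diagonal coefficients
  have hpair : ∀ i j : Fin p, i ≠ j →
      (φ (rb i)) 0 i = (φ (rb j)) 0 j ∧ (ψ (cb i)) i 0 = (ψ (cb j)) j 0 := by
    intro i j hij
    have hLC : ((rb i + rb j) : Matrix (Fin 1) (Fin p) K) * ((cb i - cb j) : Matrix (Fin p) (Fin 1) K) = 0 := by
      ext a b
      simp [rb, cb, Matrix.mul_apply, ite_and, mul_ite, ite_mul, add_mul, mul_sub, sub_mul,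
        mul_add, Finset.sum_sub_distrib, Finset.sum_add_distrib, Finset.sum_ite_eq',
        hij, Ne.symm hij]
    obtain ⟨h1, h2⟩ := h _ _ hLC
    constructor
    · have h2' : (φ (rb i) + φ (rb j)) * ((cb i - cb j) : Matrix (Fin p) (Fin 1) K) = 0 := by
        rw [← map_add]; exact h2
      rw [hφd i, hφd j] at h2'
      have := congrFun (congrFun h2' 0) 0
      simp [rb, cb, Matrix.mul_apply, Matrix.add_apply, Matrix.sub_apply, Matrix.smul_apply,
        mul_ite, ite_mul, mul_sub, Finset.sum_sub_distrib, Finset.sum_add_distrib,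
        Finset.sum_ite_eq', hij, Ne.symm hij, sub_eq_zero] at this
      exact this
    · have h1' : ((rb i + rb j) : Matrix (Fin 1) (Fin p) K) * (ψ (cb i) - ψ (cb j)) = 0 := by
        rw [← map_sub]; exact h1
      rw [hψd i, hψd j] at h1'
      have := congrFun (congrFun h1' 0) 0
      simp [rb, cb, Matrix.mul_apply, Matrix.add_apply, Matrix.sub_apply, Matrix.smul_apply,
        mul_ite, ite_mul, mul_sub, Finset.sum_sub_distrib, Finset.sum_add_distrib,
        add_mul, mul_add, mul_neg, ite_mul, mul_ite,
        Finset.sum_ite_eq', Finset.sum_ite_eq, hij, Ne.symm hij, sub_eq_zero,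
        add_neg_eq_zero, sub_eq_add_neg] at this
      exact this
  set i0 : Fin p := ⟨0, hp⟩ with hi0
  constructor
  · refine ⟨(φ (rb i0)) 0 i0, fun L => ?_⟩
    have haconst : ∀ i, (φ (rb i)) 0 i = (φ (rb i0)) 0 i0 := by
      intro i
      by_cases hi : i = i0
      · rw [hi]
      · exact (hpair i i0 hi).1
    calc φ L = φ (∑ i, L 0 i • rb i) := by rw [← row_decomp]
    _ = ∑ i, L 0 i • φ (rb i) := by simp [map_sum]
    _ = (φ (rb i0)) 0 i0 • ∑ i, L 0 i • rb i := by
        rw [Finset.smul_sum]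
        refine Finset.sum_congr rfl fun i _ => ?_
        rw [hφd i, haconst i, smul_comm]
    _ = _ := by rw [← row_decomp]
  · refine ⟨(ψ (cb i0)) i0 0, fun C => ?_⟩
    have hbconst : ∀ i, (ψ (cb i)) i 0 = (ψ (cb i0)) i0 0 := by
      intro i
      by_cases hi : i = i0
      · rw [hi]
      · exact (hpair i i0 hi).2
    calc ψ C = ψ (∑ i, C i 0 • cb i) := by rw [← col_decomp]
    _ = ∑ i, C i 0 • ψ (cb i) := by simp [map_sum]
    _ = (ψ (cb i0)) i0 0 • ∑ i, C i 0 • cb i := by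
        rw [Finset.smul_sum]
        refine Finset.sum_congr rfl fun i _ => ?_
        rw [hψd i, hbconst i, smul_comm]
    _ = _ := by rw [← col_decomp]
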